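/- For nonzero vectors x, y ∈ ℂⁿ and a matrix X ∈ Mₙ(ℂ) (with the operator norm), the rank-one matrix x y* is Birkhoff–James orthogonal to X if and only if x* X y = 0. -/

import Mathlib

set_option maxHeartbeats 1000000

open Matrix

/-- The operator (spectral) norm of a complex matrix, induced by the Euclidean norm on `ℂⁿ`. -/
noncomputable def opNorm {n : ℕ} (A : Matrix (Fin n) (Fin n) ℂ) : ℝ :=
  ‖Matrix.toEuclideanCLM (𝕜 := ℂ) (n := Fin n) A‖

/-- Birkhoff–James orthogonality of matrices with respect to the operator norm. -/
def BJ {n : ℕ} (A B : Matrix (Fin n) (Fin n) ℂ) : Prop :=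
  ∀ c : ℂ, opNorm A ≤ opNorm (A + c • B)

noncomputable def ee {n : ℕ} (v : Fin n → ℂ) : EuclideanSpace ℂ (Fin n) :=
  (WithLp.equiv 2 (Fin n → ℂ)).symm v

lemma clm_apply {n : ℕ} (A : Matrix (Fin n) (Fin n) ℂ) (v : Fin n → ℂ) :
    Matrix.toEuclideanCLM (𝕜 := ℂ) A (ee v) = ee (A.mulVec v) := by
  simp [ee, Matrix.toLin'_apply]

lemma ee_add {n : ℕ} (u v : Fin n → ℂ) : ee (u + v) = ee u + ee v := rfl
lemma ee_smul {n : ℕ} (c : ℂ) (v : Fin n → ℂ) : ee (c • v) = c • ee v := rfl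

lemma inner_ee {n : ℕ} (u v : Fin n → ℂ) :
    (inner ℂ (ee u) (ee v) : ℂ) = dotProduct (star u) v :=
  (EuclideanSpace.inner_toLp_toLp u v).trans (dotProduct_comm _ _)

lemma vecMulVec_mulVec' {n : ℕ} (x y v : Fin n → ℂ) :
    (Matrix.vecMulVec x (star y)).mulVec v = dotProduct (star y) v • x := by
  funext i
  simp only [Matrix.mulVec, Matrix.vecMulVec, dotProduct, Pi.smul_apply, smul_eq_mul,
    Matrix.of_apply, Finset.sum_mul]
  exact Finset.sum_congr rfl fun j _ => by ring

lemma lowerB {n : ℕ} (A : Matrix (Fin n) (Fin n) ℂ) (u v : Fin n → ℂ) :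
    ‖dotProduct (star u) (A.mulVec v)‖ ≤ opNorm A * ‖ee u‖ * ‖ee v‖ := by
  rw [← inner_ee, ← clm_apply]
  calc ‖(inner ℂ (ee u) (Matrix.toEuclideanCLM (𝕜 := ℂ) A (ee v)) : ℂ)‖
      ≤ ‖ee u‖ * ‖Matrix.toEuclideanCLM (𝕜 := ℂ) A (ee v)‖ := norm_inner_le_norm _ _
    _ ≤ ‖ee u‖ * (opNorm A * ‖ee v‖) := by
        gcongr; exact ContinuousLinearMap.le_opNorm _ _
    _ = opNorm A * ‖ee u‖ * ‖ee v‖ := by ring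

lemma upperB {n : ℕ} (A : Matrix (Fin n) (Fin n) ℂ) (K : ℝ) (hK : 0 ≤ K)
    (h : ∀ v : Fin n → ℂ, ‖ee (A.mulVec v)‖ ≤ K * ‖ee v‖) : opNorm A ≤ K := by
  apply ContinuousLinearMap.opNorm_le_bound _ hK
  intro w
  have h2 := h ((WithLp.equiv 2 (Fin n → ℂ)) w)
  have h3 : ee ((WithLp.equiv 2 (Fin n → ℂ)) w) = w :=
    (WithLp.equiv 2 (Fin n → ℂ)).symm_apply_apply w
  rw [h3] at h2
  rw [← h3, clm_apply] at *
  exact h2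

lemma ee_norm_pos {n : ℕ} {v : Fin n → ℂ} (hv : v ≠ 0) : 0 < ‖ee v‖ := by
  rw [norm_pos_iff]
  simpa [ee] using hv

lemma dot_self' {n : ℕ} (v : Fin n → ℂ) :
    dotProduct (star v) v = ((‖ee v‖ : ℂ) ^ 2) := by
  rw [← inner_ee, inner_self_eq_norm_sq_to_K]
  exact_mod_cast rfl

open RCLike in
lemma key_abstract {E : Type*} [NormedAddCommGroup E] [InnerProductSpace ℂ E]
    (u Y : E) (TX : E →L[ℂ] E) (hY : Y ≠ 0) (ε : ℝ) (hε : 0 < ε)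
    (h1 : ε * ‖TX‖ ^ 2 ≤ 1 / 2)
    (h2 : ε * (3 / 2 * ‖(inner ℂ u (TX Y) : ℂ)‖ ^ 2 + 2 * (‖u‖ * ‖Y‖) ^ 2 * ‖TX‖ ^ 2)
        ≤ (‖u‖ * ‖Y‖) ^ 2)
    (V : E) :
    ‖(inner ℂ Y V : ℂ) • u + (-(ε : ℂ) * starRingEnd ℂ (inner ℂ u (TX Y) : ℂ)) • TX V‖ ^ 2
      ≤ ((‖u‖ * ‖Y‖) ^ 2 - ε * ‖(inner ℂ u (TX Y) : ℂ)‖ ^ 2) * ‖V‖ ^ 2 := by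
  set t : ℂ := inner ℂ u (TX Y) with ht_def
  set c : ℂ := -(ε : ℂ) * starRingEnd ℂ t with hc_def
  set T : ℝ := ‖t‖ with hT_def
  set Nx : ℝ := ‖u‖ with hNx_def
  set Ny : ℝ := ‖Y‖ with hNy_def
  set M : ℝ := ‖TX‖ with hM_def
  have hNy0 : 0 < Ny := norm_pos_iff.mpr hY
  have hNyC : ((Ny : ℝ) : ℂ) ≠ 0 := by exact_mod_cast hNy0.ne'
  have hM0 : 0 ≤ M := norm_nonneg _
  have hNx0 : 0 ≤ Nx := norm_nonneg _
  have hT0 : 0 ≤ T := norm_nonneg _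
  set β : ℂ := inner ℂ Y V with hβ_def
  set b : ℝ := ‖β‖ with hb_def
  set w : E := V - (β / (Ny : ℂ) ^ 2) • Y with hw_def
  set s : ℝ := ‖w‖ with hs_def
  have hs0 : 0 ≤ s := norm_nonneg _
  have hb0 : 0 ≤ b := norm_nonneg _
  have hYY : (inner ℂ Y Y : ℂ) = ((Ny : ℂ)) ^ 2 := by
    rw [inner_self_eq_norm_sq_to_K]; norm_cast
  have hYw : (inner ℂ Y w : ℂ) = 0 := by
    rw [hw_def, inner_sub_right, inner_smul_right, ← hβ_def, hYY]
    field_simp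
    simp
  have hVdec : (β / (Ny : ℂ) ^ 2) • Y + w = V := by rw [hw_def]; abel
  have hsmulnorm : ‖(β / (Ny : ℂ) ^ 2) • Y‖ = b / Ny := by
    rw [norm_smul, norm_div, norm_pow, Complex.norm_real, Real.norm_eq_abs,
      abs_of_pos hNy0, ← hb_def, ← hNy_def]
    field_simp
  have hP : ‖V‖ ^ 2 = (b / Ny) ^ 2 + s ^ 2 := by
    have hYw' : (inner ℂ ((β / (Ny : ℂ) ^ 2) • Y) w : ℂ) = 0 := by
      rw [inner_smul_left, hYw, mul_zero]
    have h := norm_add_sq_eq_norm_sq_add_norm_sq_of_inner_eq_zero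
      (𝕜 := ℂ) ((β / (Ny : ℂ) ^ 2) • Y) w hYw'
    rw [hVdec, hsmulnorm] at h
    rw [pow_two, pow_two, pow_two]
    linarith [h]
  have hTXw : ‖TX w‖ ≤ M * s := TX.le_opNorm w
  have hTXV : ‖TX V‖ ≤ M * ‖V‖ := TX.le_opNorm V
  have hcnorm : ‖c‖ = ε * T := by
    rw [hc_def, norm_mul, norm_neg, Complex.norm_real, Real.norm_eq_abs, abs_of_pos hε,
      RCLike.norm_conj, ← hT_def]
  set r : ℂ := inner ℂ u (TX w) with hr_def
  have hr_le : ‖r‖ ≤ Nx * (M * s) := by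
    calc ‖r‖ ≤ ‖u‖ * ‖TX w‖ := norm_inner_le_norm _ _
      _ ≤ Nx * (M * s) := by rw [← hNx_def]; gcongr
  have hinner : (inner ℂ (β • u) (c • TX V) : ℂ)
      = starRingEnd ℂ β * c * ((β / (Ny : ℂ) ^ 2) * t) + starRingEnd ℂ β * c * r := by
    rw [inner_smul_left, inner_smul_right, ← hVdec, map_add, _root_.map_smul, inner_add_right,
      inner_smul_right, ← ht_def, hr_def]
    ring
  have hz1 : starRingEnd ℂ β * c * ((β / (Ny : ℂ) ^ 2) * t)
      = ((-(ε * b ^ 2 * T ^ 2 / Ny ^ 2) : ℝ) : ℂ) := by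
    have h1' : starRingEnd ℂ β * β = ((b : ℝ) : ℂ) ^ 2 := by
      rw [RCLike.conj_mul, hb_def]; norm_cast
    have h2' : starRingEnd ℂ t * t = ((T : ℝ) : ℂ) ^ 2 := by
      rw [RCLike.conj_mul, hT_def]; norm_cast
    have hre : starRingEnd ℂ β * c * (β / (Ny : ℂ) ^ 2 * t)
        = -(ε : ℂ) * (starRingEnd ℂ β * β) * (starRingEnd ℂ t * t) / (Ny : ℂ) ^ 2 := by
      rw [hc_def]; ring
    rw [hre, h1', h2']
    push_cast
    ring
  have hre_le : RCLike.re (inner ℂ (β • u) (c • TX V) : ℂ)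
      ≤ -(ε * b ^ 2 * T ^ 2 / Ny ^ 2) + b * (ε * T) * (Nx * (M * s)) := by
    rw [hinner, map_add, hz1]
    simp only [RCLike.re_to_complex, Complex.ofReal_re]
    have : RCLike.re (starRingEnd ℂ β * c * r) ≤ b * (ε * T) * (Nx * (M * s)) := by
      calc RCLike.re (starRingEnd ℂ β * c * r) ≤ ‖starRingEnd ℂ β * c * r‖ :=
            RCLike.re_le_norm _
        _ = b * ‖c‖ * ‖r‖ := by rw [norm_mul, norm_mul, RCLike.norm_conj, ← hb_def]
        _ ≤ b * (ε * T) * (Nx * (M * s)) := by rw [hcnorm]; gcongr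
    simp only [RCLike.re_to_complex] at this
    linarith
  have hq : ‖c • TX V‖ ≤ ε * T * (M * ‖V‖) := by
    rw [norm_smul, hcnorm]
    gcongr
  have hp : ‖β • u‖ = b * Nx := by rw [norm_smul, ← hb_def, ← hNx_def]
  have hexp := norm_add_sq (𝕜 := ℂ) (β • u) (c • TX V)
  set a : ℝ := b / Ny with ha_def
  have ha0 : 0 ≤ a := div_nonneg hb0 hNy0.le
  have hba : b = a * Ny := by rw [ha_def]; field_simp
  have hP' : ‖V‖ ^ 2 = a ^ 2 + s ^ 2 := by rw [hP, ha_def]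
  have hdiv : ε * b ^ 2 * T ^ 2 / Ny ^ 2 = ε * a ^ 2 * T ^ 2 := by
    rw [hba]; field_simp
  have hVs : 0 ≤ ‖V‖ := norm_nonneg _
  have hq2 : ‖c • TX V‖ ^ 2 ≤ (ε * T) ^ 2 * (M ^ 2 * (a ^ 2 + s ^ 2)) := by
    have h4 : ‖c • TX V‖ ^ 2 ≤ (ε * T * (M * ‖V‖)) ^ 2 :=
      pow_le_pow_left₀ (norm_nonneg _) hq 2
    have h5 : (ε * T * (M * ‖V‖)) ^ 2 = (ε * T) ^ 2 * (M ^ 2 * (a ^ 2 + s ^ 2)) := by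
      rw [← hP']; ring
    linarith
  have key : ‖β • u + c • TX V‖ ^ 2
      ≤ (a * Ny * Nx) ^ 2 + 2 * (-(ε * a ^ 2 * T ^ 2) + a * Ny * (ε * T) * (Nx * (M * s)))
        + (ε * T) ^ 2 * (M ^ 2 * (a ^ 2 + s ^ 2)) := by
    rw [hexp, hp]
    have h3 := hre_le
    rw [hdiv, hba] at h3
    have hbb : (b * Nx) ^ 2 = (a * Ny * Nx) ^ 2 := by rw [hba]
    linarith [h3, hq2, hbb]
  have hfin : (a * Ny * Nx) ^ 2 + 2 * (-(ε * a ^ 2 * T ^ 2) + a * Ny * (ε * T) * (Nx * (M * s)))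
        + (ε * T) ^ 2 * (M ^ 2 * (a ^ 2 + s ^ 2))
      ≤ ((Nx * Ny) ^ 2 - ε * T ^ 2) * (a ^ 2 + s ^ 2) := by
    have q1 := mul_nonneg hε.le (sq_nonneg (T * a - 2 * Nx * Ny * M * s))
    have q2 := mul_le_mul_of_nonneg_left h1 (by positivity : (0:ℝ) ≤ ε * T ^ 2 * a ^ 2)
    have q3 := mul_le_mul_of_nonneg_left h1 (by positivity : (0:ℝ) ≤ ε * T ^ 2 * s ^ 2)
    have q4 := mul_le_mul_of_nonneg_left h2 (sq_nonneg s)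
    ring_nf at q1 q2 q3 q4 ⊢
    linarith [q1, q2, q3, q4]
  calc ‖β • u + c • TX V‖ ^ 2 ≤ ((Nx * Ny) ^ 2 - ε * T ^ 2) * (a ^ 2 + s ^ 2) :=
        le_trans key hfin
    _ = ((Nx * Ny) ^ 2 - ε * T ^ 2) * ‖V‖ ^ 2 := by rw [hP']

lemma dotA {n : ℕ} (x y : Fin n → ℂ) :
    dotProduct (star x) ((Matrix.vecMulVec x (star y)).mulVec y)
      = ((‖ee x‖ : ℂ)) ^ 2 * ((‖ee y‖ : ℂ)) ^ 2 := by
  rw [vecMulVec_mulVec', dotProduct_smul, smul_eq_mul, dot_self' x, dot_self' y]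
  ring

lemma norm_cast_sq_mul (aa bb : ℝ) (ha : 0 ≤ aa) (hb : 0 ≤ bb) :
    ‖((aa : ℂ)) ^ 2 * ((bb : ℂ)) ^ 2‖ = (aa * bb) ^ 2 := by
  rw [norm_mul, norm_pow, norm_pow, Complex.norm_real, Complex.norm_real,
    Real.norm_eq_abs, Real.norm_eq_abs, abs_of_nonneg ha, abs_of_nonneg hb]
  ring


lemma eps_exists (M N T : ℝ) (hM0 : 0 ≤ M) (hN : 0 < N) (hT : 0 < T) :
    ∃ ε : ℝ, 0 < ε ∧ ε * M ^ 2 ≤ 1 / 2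
      ∧ ε * (3 / 2 * T ^ 2 + 2 * N ^ 2 * M ^ 2) ≤ N ^ 2 := by
  refine ⟨min (1 / (2 * (M ^ 2 + 1))) (N ^ 2 / (3 / 2 * T ^ 2 + 2 * N ^ 2 * M ^ 2 + 1)),
    lt_min (by positivity) (by positivity), ?_, ?_⟩
  · have e1 : min (1 / (2 * (M ^ 2 + 1))) (N ^ 2 / (3 / 2 * T ^ 2 + 2 * N ^ 2 * M ^ 2 + 1))
        ≤ 1 / (2 * (M ^ 2 + 1)) := min_le_left _ _
    have e2 := mul_le_mul_of_nonneg_right e1 (sq_nonneg M)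
    have e3 : (1 / (2 * (M ^ 2 + 1))) * M ^ 2 ≤ 1 / 2 := by
      rw [div_mul_eq_mul_div, one_mul, div_le_div_iff₀ (by positivity) two_pos]
      nlinarith [sq_nonneg M]
    linarith
  · have hD : (0:ℝ) ≤ 3 / 2 * T ^ 2 + 2 * N ^ 2 * M ^ 2 := by positivity
    have e1 : min (1 / (2 * (M ^ 2 + 1))) (N ^ 2 / (3 / 2 * T ^ 2 + 2 * N ^ 2 * M ^ 2 + 1))
        ≤ N ^ 2 / (3 / 2 * T ^ 2 + 2 * N ^ 2 * M ^ 2 + 1) := min_le_right _ _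
    have e2 := mul_le_mul_of_nonneg_right e1 hD
    have e3 : N ^ 2 / (3 / 2 * T ^ 2 + 2 * N ^ 2 * M ^ 2 + 1)
          * (3 / 2 * T ^ 2 + 2 * N ^ 2 * M ^ 2) ≤ N ^ 2 := by
      rw [div_mul_eq_mul_div, div_le_iff₀ (by positivity)]
      nlinarith [sq_nonneg N, hD]
    linarith

lemma epsT_le (ε N T M : ℝ) (hε : 0 < ε)
    (h2 : ε * (3 / 2 * T ^ 2 + 2 * N ^ 2 * M ^ 2) ≤ N ^ 2) : ε * T ^ 2 ≤ N ^ 2 := by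
  have q1 : 0 ≤ ε * (N ^ 2 * M ^ 2) := by positivity
  have q2 : 0 ≤ ε * T ^ 2 := by positivity
  nlinarith

lemma sqrtK_lt (N T ε : ℝ) (hN : 0 < N) (hT : 0 < T) (hε : 0 < ε)
    (hεT : ε * T ^ 2 ≤ N ^ 2) : Real.sqrt (N ^ 2 - ε * T ^ 2) < N := by
  have h0 : 0 < ε * T ^ 2 := by positivity
  calc Real.sqrt (N ^ 2 - ε * T ^ 2) < Real.sqrt (N ^ 2) := by
        apply Real.sqrt_lt_sqrt (by linarith)
        linarith
    _ = N := Real.sqrt_sq hN.le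

/-- The rank-one matrix `x y*` is BJ-orthogonal to `X` iff `x* X y = 0`. -/
theorem stmt1 {n : ℕ} (x y : Fin n → ℂ) (hx : x ≠ 0) (hy : y ≠ 0)
    (X : Matrix (Fin n) (Fin n) ℂ) :
    BJ (Matrix.vecMulVec x (star y)) X ↔ dotProduct (star x) (X.mulVec y) = 0 := by
  have hNx : 0 < ‖ee x‖ := ee_norm_pos hx
  have hNy : 0 < ‖ee y‖ := ee_norm_pos hy
  set A : Matrix (Fin n) (Fin n) ℂ := Matrix.vecMulVec x (star y) with hA_def
  set t : ℂ := dotProduct (star x) (X.mulVec y) with ht_def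
  set N : ℝ := ‖ee x‖ * ‖ee y‖ with hN_def
  have hN : 0 < N := mul_pos hNx hNy
  -- opNorm A ≥ N
  have lowerA : N ≤ opNorm A := by
    have h := lowerB A x y
    rw [hA_def, dotA, norm_cast_sq_mul _ _ hNx.le hNy.le] at h
    nlinarith [h, hN]
  constructor
  · -- forward direction
    intro hBJ
    by_contra ht
    set T : ℝ := ‖t‖ with hT_def
    have hT : 0 < T := norm_pos_iff.mpr ht
    set M : ℝ := opNorm X with hM_def
    have hM0 : 0 ≤ M := norm_nonneg _
    obtain ⟨ε, hε, h1, h2⟩ := eps_exists M N T hM0 hN hT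
    set c : ℂ := -(ε : ℂ) * starRingEnd ℂ t with hc_def
    have hεT : ε * T ^ 2 ≤ N ^ 2 := epsT_le ε N T M hε h2
    set K : ℝ := Real.sqrt (N ^ 2 - ε * T ^ 2) with hK_def
    have hK0 : 0 ≤ K := Real.sqrt_nonneg _
    have hK2 : K ^ 2 = N ^ 2 - ε * T ^ 2 := Real.sq_sqrt (by linarith)
    -- the key norm bound
    have hbound : opNorm (A + c • X) ≤ K := by
      apply upperB _ _ hK0
      intro v
      set TX := Matrix.toEuclideanCLM (𝕜 := ℂ) X with hTX_def
      have hinner_t : (inner ℂ (ee x) (TX (ee y)) : ℂ) = t := by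
        rw [hTX_def, clm_apply, inner_ee, ht_def]
      have hsplit : ee ((A + c • X).mulVec v)
          = (inner ℂ (ee y) (ee v) : ℂ) • ee x + c • TX (ee v) := by
        rw [hA_def, Matrix.add_mulVec, Matrix.smul_mulVec, ee_add, ee_smul,
          vecMulVec_mulVec', ee_smul, hTX_def, clm_apply, inner_ee]
      have heey : ee y ≠ 0 := by
        intro h; exact hy (by simpa [ee] using h)
      have hTXnorm : ‖TX‖ = M := rfl
      have habs := key_abstract (ee x) (ee y) TX heey ε hε
        (by rw [hTXnorm]; exact h1)
        (by rw [hTXnorm, hinner_t, ← hT_def, ← hN_def]; exact h2) (ee v)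
      rw [hinner_t, ← hc_def, ← hsplit, ← hN_def, ← hT_def] at habs
      have hfin : ‖ee ((A + c • X).mulVec v)‖ ^ 2 ≤ (K * ‖ee v‖) ^ 2 := by
        rw [mul_pow, hK2]
        exact habs
      calc ‖ee ((A + c • X).mulVec v)‖
          = Real.sqrt (‖ee ((A + c • X).mulVec v)‖ ^ 2) :=
            (Real.sqrt_sq (norm_nonneg _)).symm
        _ ≤ Real.sqrt ((K * ‖ee v‖) ^ 2) := Real.sqrt_le_sqrt hfin
        _ = K * ‖ee v‖ := Real.sqrt_sq (by positivity)
    have hKN : K < N := sqrtK_lt N T ε hN hT hε hεT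
    have := hBJ c
    linarith
  · -- backward direction
    intro ht c
    -- opNorm A ≤ N
    have upperA : opNorm A ≤ N := by
      apply upperB _ _ hN.le
      intro v
      rw [hA_def, vecMulVec_mulVec', ee_smul, norm_smul]
      have h := norm_inner_le_norm (𝕜 := ℂ) (ee y) (ee v)
      rw [inner_ee] at h
      calc ‖dotProduct (star y) v‖ * ‖ee x‖
          ≤ (‖ee y‖ * ‖ee v‖) * ‖ee x‖ := mul_le_mul_of_nonneg_right h (norm_nonneg _)
        _ = N * ‖ee v‖ := by rw [hN_def]; ring
    -- opNorm (A + c • X) ≥ N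
    have hdot : dotProduct (star x) ((A + c • X).mulVec y)
        = ((‖ee x‖ : ℂ)) ^ 2 * ((‖ee y‖ : ℂ)) ^ 2 := by
      rw [Matrix.add_mulVec, Matrix.smul_mulVec, dotProduct_add,
        dotProduct_smul, hA_def, dotA, smul_eq_mul, ← ht_def, ht]
      ring
    have h := lowerB (A + c • X) x y
    rw [hdot, norm_cast_sq_mul _ _ hNx.le hNy.le] at h
    have : N ≤ opNorm (A + c • X) := by nlinarith [h, hN]
    linarith
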